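/- Let G be a compact group, E the space of square-integrable complex functions on G with zero mean, with G acting by left translation on the argument. If H is a proper closed subgroup of G, then the restriction to H of this representation has a nonzero fixed vector, while the G-representation on E has no nonzero fixed vector. -/

import Mathlib

open MeasureTheory
open scoped Pointwise BoundedContinuousFunction

section Aux

variable {G : Type*} [Group G] [TopologicalSpace G] [IsTopologicalGroup G]
    [CompactSpace G] [MeasurableSpace G] [BorelSpace G]

private lemma prob_eq_haar (μ ν : Measure G) [μ.IsHaarMeasure] [IsProbabilityMeasure μ]
    [ν.IsMulLeftInvariant] [IsProbabilityMeasure ν] : ν = μ := by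
  have h := Measure.isMulInvariant_eq_smul_of_compactSpace ν μ
  set c := ν.haarScalarFactor μ with hc
  have huniv : ν Set.univ = (c • μ) Set.univ := by rw [← h]
  have h1 : (1 : ENNReal) = c • (1 : ENNReal) := by
    simpa [Measure.smul_apply, measure_univ] using huniv
  have hc1 : c = 1 := by
    have h2 := h1.symm
    rw [ENNReal.smul_def, smul_eq_mul, mul_one] at h2
    exact_mod_cast h2
  rw [h, hc1, one_smul]

private lemma haar_right_inv (μ : Measure G) [μ.IsHaarMeasure] [IsProbabilityMeasure μ] :
    μ.IsMulRightInvariant := by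
  constructor
  intro g
  haveI : (Measure.map (fun x => x * g) μ).IsMulLeftInvariant :=
    isMulLeftInvariant_map_mul_right g
  haveI : IsProbabilityMeasure (Measure.map (fun x => x * g) μ) :=
    Measure.isProbabilityMeasure_map (measurable_mul_const g).aemeasurable
  exact prob_eq_haar μ _

end Aux

/-- Let `G` be a compact group with normalized Haar measure, and let `E` be the space of
square-integrable complex functions with zero mean, on which `G` acts by left translation of
the argument.  If `H` is a proper closed subgroup of `G`, then the restriction of this
representation to `H` admits a nonzero fixed vector, while the `G`-representation on `E` has
no nonzero fixed vector. -/
theorem fixed_vectors_zero_mean_L2 {G : Type*} [Group G] [TopologicalSpace G]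
    [IsTopologicalGroup G] [CompactSpace G] [MeasurableSpace G] [BorelSpace G]
    (lG : Measure G) [lG.IsHaarMeasure] [IsProbabilityMeasure lG]
    (H : Subgroup G) (hclosed : IsClosed (H : Set G)) (hproper : H ≠ ⊤) :
    (∃ φ : Lp ℂ 2 lG, φ ≠ 0 ∧ (∫ x, φ x ∂lG) = 0 ∧
        ∀ h ∈ H, (fun x => φ (h⁻¹ * x)) =ᵐ[lG] φ) ∧
      (∀ φ : Lp ℂ 2 lG, (∫ x, φ x ∂lG) = 0 →
        (∀ g : G, (fun x => φ (g⁻¹ * x)) =ᵐ[lG] φ) → φ = 0) := by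
  constructor
  · -- existence of a nonzero `H`-fixed vector
    obtain ⟨x₀, hx₀⟩ : ∃ x, x ∉ H := by
      by_contra hcon
      push_neg at hcon
      exact hproper ((Subgroup.eq_top_iff' H).2 hcon)
    -- the closed set `H x₀` (image of `H` under right translation)
    set t : Set G := (fun y => y * x₀) '' (H : Set G) with htdef
    have hclosedt : IsClosed t := (Homeomorph.mulRight x₀).isClosedMap _ hclosed
    have hdisj : Disjoint t (H : Set G) := by
      rw [Set.disjoint_left]
      rintro x ⟨h, hh, rfl⟩ hx
      exact hx₀ (by simpa using H.mul_mem (H.inv_mem hh) hx)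
    obtain ⟨u, hu0, hu1, hubd⟩ := exists_continuous_zero_one_of_isClosed hclosedt hclosed hdisj
    -- `A = {u ≥ 1/2}` and the `H`-saturated set `S = H * A`
    set A : Set G := ⇑u ⁻¹' Set.Ici (1 / 2 : ℝ) with hAdef
    have hAclosed : IsClosed A := IsClosed.preimage u.continuous isClosed_Ici
    set S : Set G := (H : Set G) * A with hSdef
    have hSmem : ∀ {x : G}, x ∈ S ↔ ∃ h ∈ (H : Set G), ∃ a ∈ A, h * a = x := by
      intro x; rw [hSdef]; exact Set.mem_mul
    have hSclosed : IsClosed S := by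
      rw [hSdef]; exact hAclosed.mul_left_of_isCompact hclosed.isCompact
    have hSmeas : MeasurableSet S := hSclosed.measurableSet
    have hAS : A ⊆ S := fun a ha => hSmem.2 ⟨1, H.one_mem, a, ha, one_mul a⟩
    have hsubO : ⇑u ⁻¹' Set.Ioi (1 / 2 : ℝ) ⊆ S := by
      intro x hx
      refine hAS ?_
      have hlt : (1 / 2 : ℝ) < u x := hx
      show x ∈ ⇑u ⁻¹' Set.Ici (1 / 2 : ℝ)
      exact le_of_lt hlt
    have hSpos : 0 < lG S :=
      lt_of_lt_of_le ((IsOpen.preimage u.continuous isOpen_Ioi).measure_pos lG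
        ⟨1, by simpa [hu1 H.one_mem] using (by norm_num : (1/2 : ℝ) < 1)⟩)
        (measure_mono hsubO)
    have hx₀S : x₀ ∉ S := by
      intro hx
      obtain ⟨h, hh, a, ha, heq⟩ := hSmem.1 hx
      have hat : a ∈ t := ⟨h⁻¹, H.inv_mem hh, by show h⁻¹ * x₀ = a; rw [← heq, inv_mul_cancel_left]⟩
      have h0 := hu0 hat
      have h2 : (1 / 2 : ℝ) ≤ u a := ha
      rw [h0] at h2
      norm_num at h2
    have hScpos : 0 < lG Sᶜ := hSclosed.isOpen_compl.measure_pos lG ⟨x₀, hx₀S⟩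
    set c : ℝ := (lG S).toReal with hcdef
    set φ₀ : G → ℂ := fun x => Set.indicator S (fun _ => (1 : ℂ)) x - (c : ℂ) with hφ₀def
    have hφ₀sm : StronglyMeasurable φ₀ :=
      (stronglyMeasurable_const.indicator hSmeas).sub stronglyMeasurable_const
    have hmem : MemLp φ₀ 2 lG := by
      refine MemLp.of_bound hφ₀sm.aestronglyMeasurable (1 + ‖(c : ℂ)‖)
        (Filter.Eventually.of_forall fun x => ?_)
      refine le_trans (norm_sub_le _ _) (add_le_add ?_ le_rfl)
      by_cases hx : x ∈ S
      · simp [hφ₀def, Set.indicator_of_mem hx]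
      · simp [hφ₀def, Set.indicator_of_notMem hx]
    refine ⟨hmem.toLp φ₀, ?_, ?_, ?_⟩
    · -- nonzero
      intro h0
      have hphi : φ₀ =ᵐ[lG] 0 :=
        (hmem.coeFn_toLp.symm.trans (by rw [h0])).trans (Lp.coeFn_zero ℂ 2 lG)
      have hz : lG {x | ¬ (φ₀ x = 0)} = 0 := by simpa using ae_iff.1 hphi
      by_cases hc1 : (1 : ℂ) - (c : ℂ) = 0
      · have hsub : Sᶜ ⊆ {x | ¬ (φ₀ x = 0)} := by
          intro x hx
          have hc' : (c : ℂ) = 1 := by linear_combination -hc1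
          simp [hφ₀def, Set.indicator_of_notMem hx, hc']
        exact hScpos.ne' (measure_mono_null hsub hz)
      · have hsub : S ⊆ {x | ¬ (φ₀ x = 0)} := by
          intro x hx
          simpa [hφ₀def, Set.indicator_of_mem hx, sub_eq_zero] using
            fun hcon => hc1 (by rw [sub_eq_zero, hcon])
        exact hSpos.ne' (measure_mono_null hsub hz)
    · -- zero mean
      rw [integral_congr_ae hmem.coeFn_toLp]
      have hi : Integrable (Set.indicator S (fun _ => (1 : ℂ))) lG :=
        (integrable_const (1 : ℂ)).indicator hSmeas
      rw [hφ₀def]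
      simp only []
      rw [integral_sub hi (integrable_const _), integral_indicator_const _ hSmeas, integral_const]
      simp [measure_univ, Complex.real_smul, hcdef, Measure.real]
    · -- `H`-invariance
      intro h hh
      have hSinv : ∀ x : G, (h⁻¹ * x ∈ S ↔ x ∈ S) := by
        intro x
        constructor
        · intro hx
          obtain ⟨h', hh', a, ha, heq⟩ := hSmem.1 hx
          exact hSmem.2 ⟨h * h', H.mul_mem hh hh', a, ha, by
            rw [mul_assoc, heq, mul_inv_cancel_left]⟩
        · intro hx
          obtain ⟨h', hh', a, ha, heq⟩ := hSmem.1 hx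
          exact hSmem.2 ⟨h⁻¹ * h', H.mul_mem (H.inv_mem hh) hh', a, ha, by
            rw [mul_assoc, heq]⟩
      have hpt : ∀ x : G, φ₀ (h⁻¹ * x) = φ₀ x := by
        intro x
        by_cases hx : x ∈ S
        · simp [hφ₀def, Set.indicator_of_mem hx, Set.indicator_of_mem ((hSinv x).2 hx)]
        · have hx' : h⁻¹ * x ∉ S := fun hcon => hx ((hSinv x).1 hcon)
          simp [hφ₀def, Set.indicator_of_notMem hx, Set.indicator_of_notMem hx']
      have hqmp : Measure.QuasiMeasurePreserving (fun x : G => h⁻¹ * x) lG lG :=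
        (measurePreserving_mul_left lG h⁻¹).quasiMeasurePreserving
      calc (fun x => (hmem.toLp φ₀ : Lp ℂ 2 lG) (h⁻¹ * x))
          =ᵐ[lG] (fun x => φ₀ (h⁻¹ * x)) := hqmp.ae_eq_comp hmem.coeFn_toLp
        _ = φ₀ := funext hpt
        _ =ᵐ[lG] _ := hmem.coeFn_toLp.symm
  · -- no nonzero `G`-fixed vector
    intro φ hint hinv
    haveI := haar_right_inv lG
    set f : G → ℂ := ⇑φ with hfdef
    have hf1 : Integrable f lG := (Lp.memLp φ).integrable (by norm_num)
    have key : ∀ v : G →ᵇ ℂ, ∫ y, v y * f y ∂lG = 0 := by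
      intro v
      have hW : Continuous (fun p : G × G => (v (p.1 * p.2) : ℂ)) :=
        v.continuous.comp (continuous_fst.mul continuous_snd)
      have hWsm : StronglyMeasurable (fun p : G × G => (v (p.1 * p.2) : ℂ)) :=
        HasCompactSupport.stronglyMeasurable_of_prod hW ((isClosed_tsupport _).isCompact)
      have hf2 : Integrable (fun p : G × G => f p.2) (lG.prod lG) := by
        refine ⟨((Lp.stronglyMeasurable φ).comp_measurable measurable_snd).aestronglyMeasurable,
          ?_⟩
        have hm : Measurable fun p : G × G => ‖f p.2‖ₑ :=
          ((Lp.stronglyMeasurable φ).measurable.comp measurable_snd).enorm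
        show (∫⁻ p, ‖f p.2‖ₑ ∂(lG.prod lG)) < ⊤
        rw [lintegral_prod _ hm.aemeasurable]
        simp only [lintegral_const, measure_univ, mul_one, one_mul]
        exact hf1.2
      have hFint : Integrable
          (Function.uncurry fun g y => (v (g * y) : ℂ) * f y) (lG.prod lG) :=
        hf2.bdd_mul hWsm.aestronglyMeasurable (Filter.Eventually.of_forall fun p => v.norm_coe_le_norm _)
      have swap := integral_integral_swap hFint
      have hleft : ∀ g : G, ∫ y, (v (g * y) : ℂ) * f y ∂lG = ∫ y, v y * f y ∂lG := by
        intro g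
        have h1 : ∫ y, (v (g * y) : ℂ) * f y ∂lG = ∫ x, (v x : ℂ) * f (g⁻¹ * x) ∂lG := by
          rw [← integral_mul_left_eq_self (fun x => (v x : ℂ) * f (g⁻¹ * x)) g]
          simp [inv_mul_cancel_left]
        rw [h1]
        exact integral_congr_ae (Filter.EventuallyEq.mul Filter.EventuallyEq.rfl (hinv g))
      have hright : ∀ y : G, ∫ g, (v (g * y) : ℂ) * f y ∂lG = (∫ x, (v x : ℂ) ∂lG) * f y := by
        intro y
        rw [integral_mul_const]
        rw [integral_mul_right_eq_self (fun x => (v x : ℂ)) y]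
      have h0 : ∫ y, v y * f y ∂lG = ∫ (_ : G), (∫ y, v y * f y ∂lG) ∂lG := by
        rw [integral_const]; simp [measure_univ]
      calc ∫ y, v y * f y ∂lG
          = ∫ g, (∫ y, (v (g * y) : ℂ) * f y ∂lG) ∂lG := by
            rw [h0]
            exact integral_congr_ae (Filter.Eventually.of_forall fun g => (hleft g).symm)
        _ = ∫ y, (∫ g, (v (g * y) : ℂ) * f y ∂lG) ∂lG := swap
        _ = ∫ y, (∫ x, (v x : ℂ) ∂lG) * f y ∂lG := by
            exact integral_congr_ae (Filter.Eventually.of_forall fun y => hright y)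
        _ = (∫ x, (v x : ℂ) ∂lG) * ∫ y, f y ∂lG := integral_const_mul _ _
        _ = 0 := by rw [hint, mul_zero]
    have hinner : ∀ v : G →ᵇ ℂ,
        (inner ℂ ((BoundedContinuousFunction.toLp 2 lG ℂ) v) φ : ℂ) = 0 := by
      intro v
      rw [L2.inner_def]
      have hae : (fun a => (inner ℂ (((BoundedContinuousFunction.toLp 2 lG ℂ) v : Lp ℂ 2 lG) a)
          (φ a) : ℂ)) =ᵐ[lG] fun a => (star v : G →ᵇ ℂ) a * f a := by
        filter_upwards [BoundedContinuousFunction.coeFn_toLp 2 lG ℂ v] with a ha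
        rw [ha]
        simp only [RCLike.inner_apply, starRingEnd_apply, BoundedContinuousFunction.coe_star,
          Pi.star_apply, hfdef]
        exact mul_comm _ _
      rw [integral_congr_ae hae]
      exact key (star v)
    have hall : ∀ ψ : Lp ℂ 2 lG, (inner ℂ ψ φ : ℂ) = 0 := by
      have hdr := BoundedContinuousFunction.toLp_denseRange ℂ lG ℂ
        (by norm_num : (2 : ENNReal) ≠ ⊤)
      have hcont : Continuous fun ψ : Lp ℂ 2 lG => (inner ℂ ψ φ : ℂ) :=
        continuous_id.inner continuous_const
      have heq := Continuous.ext_on (g := fun _ : Lp ℂ 2 lG => (0 : ℂ)) hdr hcont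
        continuous_const ?_
      · exact fun ψ => congrFun heq ψ
      · rintro _ ⟨v, rfl⟩
        exact hinner v
    have hzero := hall φ
    rwa [inner_self_eq_zero] at hzero
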